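/- arXiv:1011.3251 — 8 statements merged into one kernel-verified Lean document; each statement's English description precedes it below -/
import Mathlib

section
/- Let a, w : ℝ³ → ℝ³ be C¹ vector fields and set v = a × w (pointwise cross product). Assume ⟨a(x), rot v(x)⟩ = 0 for all x ∈ ℝ³. Then every solution x : I → ℝ³ of ẋ = v(x) satisfies the constraint ⟨a(x(t)), ẋ(t)⟩ = 0 and the second-order equation ẍ(t) = ∇(½‖v‖²)(x(t)) + ⟨rot v(x(t)), w(x(t))⟩ · a(x(t)) for all t ∈ I. -/
open Real Set

noncomputable section

/-- Partial derivative in the `k`-th coordinate direction. -/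
def pd (k : Fin 3) (f : (Fin 3 → ℝ) → ℝ) (x : Fin 3 → ℝ) : ℝ :=
  fderiv ℝ f x (Pi.single k 1)

/-- Gradient. -/
def grad (f : (Fin 3 → ℝ) → ℝ) (x : Fin 3 → ℝ) : Fin 3 → ℝ := fun k => pd k f x

/-- Euclidean inner product on ℝ³. -/
def dot (a b : Fin 3 → ℝ) : ℝ := ∑ i, a i * b i

/-- Squared Euclidean norm on ℝ³. -/
def nsq (a : Fin 3 → ℝ) : ℝ := ∑ i, a i ^ 2

/-- Cross product on ℝ³. -/
def cross (a b : Fin 3 → ℝ) : Fin 3 → ℝ :=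
  ![a 1 * b 2 - a 2 * b 1, a 2 * b 0 - a 0 * b 2, a 0 * b 1 - a 1 * b 0]

/-- Curl of a vector field on ℝ³. -/
def rot (u : (Fin 3 → ℝ) → (Fin 3 → ℝ)) (x : Fin 3 → ℝ) : Fin 3 → ℝ :=
  ![pd 1 (fun y => u y 2) x - pd 2 (fun y => u y 1) x,
    pd 2 (fun y => u y 0) x - pd 0 (fun y => u y 2) x,
    pd 0 (fun y => u y 1) x - pd 1 (fun y => u y 0) x]

/-- Equations (E1): for the Cartesian vector field `v = a × w` with
`⟨a, rot v⟩ = 0`, solutions of `ẋ = v(x)` satisfy the constraint `⟨a(x), ẋ⟩ = 0`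
and the second-order equation `ẍ = ∇(½‖v‖²)(x) + ⟨rot v(x), w(x)⟩ a(x)`. -/
theorem cartesian_particle_R3
    (a w : (Fin 3 → ℝ) → (Fin 3 → ℝ))
    (ha : ContDiff ℝ 1 a) (hw : ContDiff ℝ 1 w)
    (v : (Fin 3 → ℝ) → (Fin 3 → ℝ))
    (hv : ∀ x, v x = cross (a x) (w x))
    (hcomp : ∀ x, dot (a x) (rot v x) = 0)
    (t₁ t₂ : ℝ) (x : ℝ → (Fin 3 → ℝ))
    (hx : ∀ t ∈ Ioo t₁ t₂, HasDerivAt x (v (x t)) t) :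
    ∀ t ∈ Ioo t₁ t₂,
      dot (a (x t)) (v (x t)) = 0 ∧
      HasDerivAt (fun s => v (x s))
        (fun k => grad (fun y => (1 / 2) * nsq (v y)) (x t) k
          + dot (rot v (x t)) (w (x t)) * a (x t) k) t := by
  intro t ht
  set p := x t with hp
  -- v is C¹
  have hv1 : ContDiff ℝ 1 v := by
    have hveq : v = fun y => cross (a y) (w y) := funext hv
    rw [hveq]
    apply contDiff_pi.2
    intro k
    have hA : ∀ i : Fin 3, ContDiff ℝ 1 (fun y => a y i) := fun i => contDiff_pi.1 ha i
    have hW : ∀ i : Fin 3, ContDiff ℝ 1 (fun y => w y i) := fun i => contDiff_pi.1 hw i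
    fin_cases k <;> simp [cross] <;>
      exact ((hA _).mul (hW _)).sub ((hA _).mul (hW _))
  have hF : HasFDerivAt v (fderiv ℝ v p) p :=
    ((hv1.differentiable one_ne_zero) p).hasFDerivAt
  set F := fderiv ℝ v p with hFdef
  have hFk : ∀ k : Fin 3, HasFDerivAt (fun y => v y k)
      ((ContinuousLinearMap.proj k : ((Fin 3 → ℝ)) →L[ℝ] ℝ).comp F) p := fun k =>
    ((ContinuousLinearMap.proj k : ((Fin 3 → ℝ)) →L[ℝ] ℝ).hasFDerivAt).comp p hF
  have hD : ∀ j k : Fin 3, pd j (fun y => v y k) p = F (Pi.single j 1) k := by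
    intro j k
    rw [pd, (hFk k).fderiv]
    rfl
  -- gradient computation
  have hGrad : ∀ k : Fin 3, grad (fun y => (1 / 2) * nsq (v y)) p k
      = ∑ i, v p i * F (Pi.single k 1) i := by
    intro k
    have hf : HasFDerivAt (fun y => (1 / 2 : ℝ) * nsq (v y))
        (∑ i, v p i • ((ContinuousLinearMap.proj i : ((Fin 3 → ℝ)) →L[ℝ] ℝ).comp F)) p := by
      have h1 : HasFDerivAt (fun y => nsq (v y))
          (∑ i, (v p i • ((ContinuousLinearMap.proj i : ((Fin 3 → ℝ)) →L[ℝ] ℝ).comp F)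
            + v p i • ((ContinuousLinearMap.proj i : ((Fin 3 → ℝ)) →L[ℝ] ℝ).comp F))) p := by
        have := HasFDerivAt.fun_sum (fun i (_ : i ∈ Finset.univ) => (hFk i).mul (hFk i))
        simpa [nsq, pow_two] using this
      have h2 := h1.const_mul (1 / 2 : ℝ)
      refine h2.congr_fderiv ?_
      ext u
      simp only [ContinuousLinearMap.sum_apply, ContinuousLinearMap.smul_apply,
        ContinuousLinearMap.add_apply, smul_eq_mul, Finset.mul_sum]
      refine Finset.sum_congr rfl fun i _ => ?_
      ring
    rw [grad, pd, hf.fderiv]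
    simp only [ContinuousLinearMap.sum_apply, ContinuousLinearMap.smul_apply,
      ContinuousLinearMap.comp_apply, ContinuousLinearMap.proj_apply, smul_eq_mul]
  -- F applied to v p
  have hrep : v p = ∑ j, v p j • (Pi.single j 1 : Fin 3 → ℝ) := by
    funext i
    simp [Finset.sum_apply, Pi.single_apply]
  have hFv : ∀ k : Fin 3, F (v p) k = ∑ j, v p j * F (Pi.single j 1) k := by
    intro k
    conv_lhs => rw [hrep]
    simp [map_sum, Finset.sum_apply]
  -- derivative of v ∘ x
  have hder : HasDerivAt (fun s => v (x s)) (F (v p)) t :=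
    hF.comp_hasDerivAt t (hx t ht)
  have hcomp' := hcomp p
  have hvp := hv p
  constructor
  · rw [hvp]
    simp [dot, cross, Fin.sum_univ_three]
    ring
  · have hrot : ∀ i : Fin 3, rot v p i =
        ![F (Pi.single 1 1) 2 - F (Pi.single 2 1) 1,
          F (Pi.single 2 1) 0 - F (Pi.single 0 1) 2,
          F (Pi.single 0 1) 1 - F (Pi.single 1 1) 0] i := by
      intro i
      fin_cases i <;> simp [rot, hD]
    have hc : dot (a p) (rot v p) = 0 := hcomp'
    simp only [dot, Fin.sum_univ_three, hrot, Matrix.cons_val_zero, Matrix.cons_val_one,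
      Matrix.head_cons, Matrix.cons_val_two, Matrix.tail_cons] at hc
    have hv0 := congrFun hvp 0
    have hv1' := congrFun hvp 1
    have hv2 := congrFun hvp 2
    simp only [cross, Matrix.cons_val_zero, Matrix.cons_val_one, Matrix.head_cons,
      Matrix.cons_val_two, Matrix.tail_cons] at hv0 hv1' hv2
    have key : F (v p) = (fun k => grad (fun y => (1 / 2) * nsq (v y)) p k
        + dot (rot v p) (w p) * a p k) := by
      funext k
      rw [hFv k, hGrad k]
      simp only [dot, Fin.sum_univ_three, hrot, Matrix.cons_val_zero, Matrix.cons_val_one,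
        Matrix.head_cons, Matrix.cons_val_two, Matrix.tail_cons]
      fin_cases k
      · simp only [Fin.isValue, Fin.sum_univ_three, hv0, hv1', hv2,
          show ((⟨0, by norm_num⟩ : Fin 3)) = 0 from rfl, show ((⟨1, by norm_num⟩ : Fin 3)) = 1 from rfl,
          show ((⟨2, by norm_num⟩ : Fin 3)) = 2 from rfl]
        linear_combination (-(w p 0)) * hc
      · simp only [Fin.isValue, Fin.sum_univ_three, hv0, hv1', hv2,
          show ((⟨0, by norm_num⟩ : Fin 3)) = 0 from rfl, show ((⟨1, by norm_num⟩ : Fin 3)) = 1 from rfl,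
          show ((⟨2, by norm_num⟩ : Fin 3)) = 2 from rfl]
        linear_combination (-(w p 1)) * hc
      · simp only [Fin.isValue, Fin.sum_univ_three, hv0, hv1', hv2,
          show ((⟨0, by norm_num⟩ : Fin 3)) = 0 from rfl, show ((⟨1, by norm_num⟩ : Fin 3)) = 1 from rfl,
          show ((⟨2, by norm_num⟩ : Fin 3)) = 2 from rfl]
        linear_combination (-(w p 2)) * hc
    rw [key] at hder
    exact hder
end
end

section
/- Let a, v, R : ℝ³ → ℝ³ be C¹ vector fields and ν : ℝ³ → ℝ a function such that ⟨v(x), a(x)⟩ = 0 and rot v(x) = ν(x) v(x) + R(x) × a(x) for all x ∈ ℝ³. Then every solution x : I → ℝ³ of ẋ = v(x) satisfies ẍ(t) = ∇(½‖v‖²)(x(t)) + ⟨R(x(t)), v(x(t))⟩ · a(x(t)) for all t ∈ I. -/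
open Real Set

noncomputable section

/-- Kummer systems (equation (88)): if `⟨v, a⟩ = 0` and `rot v = ν v + R × a`, then
solutions of `ẋ = v(x)` satisfy `ẍ = ∇(½‖v‖²)(x) + ⟨R(x), v(x)⟩ a(x)`. -/
theorem kummer_second_order
    (a v R : (Fin 3 → ℝ) → (Fin 3 → ℝ)) (ν : (Fin 3 → ℝ) → ℝ)
    (ha : ContDiff ℝ 1 a) (hv : ContDiff ℝ 1 v) (hR : ContDiff ℝ 1 R)
    (horth : ∀ x, dot (v x) (a x) = 0)
    (hrot : ∀ x, rot v x = fun k => ν x * v x k + cross (R x) (a x) k)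
    (t₁ t₂ : ℝ) (x : ℝ → (Fin 3 → ℝ))
    (hx : ∀ t ∈ Ioo t₁ t₂, HasDerivAt x (v (x t)) t) :
    ∀ t ∈ Ioo t₁ t₂,
      HasDerivAt (fun s => v (x s))
        (fun k => grad (fun y => (1 / 2) * nsq (v y)) (x t) k
          + dot (R (x t)) (v (x t)) * a (x t) k) t := by
  intro t ht
  set y := x t with hy
  have hdv : HasFDerivAt v (fderiv ℝ v y) y :=
    ((hv.differentiable one_ne_zero) y).hasFDerivAt
  set D := fderiv ℝ v y with hD
  have hchain : HasDerivAt (fun s => v (x s)) (D (v y)) t :=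
    hdv.comp_hasDerivAt t (hx t ht)
  -- component derivatives
  have hcomp : ∀ k : Fin 3, HasFDerivAt (fun z => v z k)
      ((ContinuousLinearMap.proj k).comp D) y := fun k =>
    ((ContinuousLinearMap.proj k : (Fin 3 → ℝ) →L[ℝ] ℝ).hasFDerivAt (x := v y)).comp y hdv
  have hpd : ∀ i k : Fin 3, pd i (fun z => v z k) y = D (Pi.single i 1) k := by
    intro i k
    rw [pd, (hcomp k).fderiv]
    rfl
  -- gradient of (1/2) * nsq ∘ v
  have hgradfun : HasFDerivAt (fun z => (1 / 2 : ℝ) * nsq (v z))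
      ((1/2 : ℝ) • ∑ i : Fin 3,
        (v y i • ((ContinuousLinearMap.proj i).comp D)
          + v y i • ((ContinuousLinearMap.proj i).comp D))) y := by
    have heq : (fun z => (1 / 2 : ℝ) * nsq (v z))
        = fun z => (1 / 2 : ℝ) * ∑ i : Fin 3, (v z i) * (v z i) := by
      funext z
      simp [nsq, sq]
    rw [heq]
    exact (HasFDerivAt.fun_sum (fun i _ => (hcomp i).fun_mul (hcomp i))).const_mul _
  have hgrad : ∀ k : Fin 3, grad (fun z => (1 / 2) * nsq (v z)) y k
      = ∑ i : Fin 3, v y i * D (Pi.single k 1) i := by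
    intro k
    rw [grad, pd, hgradfun.fderiv]
    simp only [ContinuousLinearMap.smul_apply, ContinuousLinearMap.sum_apply,
      ContinuousLinearMap.add_apply, ContinuousLinearMap.comp_apply,
      ContinuousLinearMap.proj_apply, smul_eq_mul]
    rw [Fin.sum_univ_three, Fin.sum_univ_three]
    ring
  -- D (v y) in terms of partials
  have hvy : v y = ∑ i : Fin 3, v y i • (Pi.single i 1 : Fin 3 → ℝ) := by
    funext j
    simp [Finset.sum_apply, Pi.single_apply]
  have hDvy : ∀ k : Fin 3, D (v y) k = ∑ i : Fin 3, v y i * D (Pi.single i 1) k := by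
    intro k
    conv_lhs => rw [hvy]
    rw [map_sum]
    simp [Finset.sum_apply]
  -- rot equations
  have h0 := congrFun (hrot y) 0
  have h1 := congrFun (hrot y) 1
  have h2 := congrFun (hrot y) 2
  simp only [rot, cross, Matrix.cons_val_zero, Matrix.cons_val_one, Matrix.head_cons,
    Matrix.cons_val_two, Matrix.tail_cons, hpd] at h0 h1 h2
  have ho := horth y
  rw [dot, Fin.sum_univ_three] at ho
  convert hchain using 1
  funext k
  fin_cases k
  · show grad (fun z => (1 / 2) * nsq (v z)) y 0 + dot (R y) (v y) * a y 0 = D (v y) 0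
    rw [hgrad 0, hDvy 0, Fin.sum_univ_three, Fin.sum_univ_three, dot, Fin.sum_univ_three]
    linear_combination (v y 1) * h2 - (v y 2) * h1 + (R y 0) * ho
  · show grad (fun z => (1 / 2) * nsq (v z)) y 1 + dot (R y) (v y) * a y 1 = D (v y) 1
    rw [hgrad 1, hDvy 1, Fin.sum_univ_three, Fin.sum_univ_three, dot, Fin.sum_univ_three]
    linear_combination -(v y 0) * h2 + (v y 2) * h0 + (R y 1) * ho
  · show grad (fun z => (1 / 2) * nsq (v z)) y 2 + dot (R y) (v y) * a y 2 = D (v y) 2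
    rw [hgrad 2, hDvy 2, Fin.sum_univ_three, Fin.sum_univ_three, dot, Fin.sum_univ_three]
    linear_combination (v y 0) * h1 - (v y 1) * h0 + (R y 2) * ho
end
end

section
/- Let v : ℝ³ → ℝ³ be a C¹ vector field and ν : ℝ³ → ℝ a function such that rot v(x) = ν(x) v(x) for all x ∈ ℝ³. Then every solution x : I → ℝ³ of ẋ = v(x) satisfies ẍ(t) = ∇(½‖v‖²)(x(t)) for all t ∈ I; i.e. the trajectories are motions of a unit-mass material point in the potential field with force function U = ½‖v‖². -/
open Real Set

noncomputable section

/-- Bernoulli's optical–mechanical analogy: if `rot v = ν v`, then solutions of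
`ẋ = v(x)` satisfy `ẍ = ∇(½‖v‖²)(x)`. -/
theorem bernoulli_optical_mechanical
    (v : (Fin 3 → ℝ) → (Fin 3 → ℝ)) (ν : (Fin 3 → ℝ) → ℝ)
    (hv : ContDiff ℝ 1 v)
    (hrot : ∀ x, rot v x = fun k => ν x * v x k)
    (t₁ t₂ : ℝ) (x : ℝ → (Fin 3 → ℝ))
    (hx : ∀ t ∈ Ioo t₁ t₂, HasDerivAt x (v (x t)) t) :
    ∀ t ∈ Ioo t₁ t₂,
      HasDerivAt (fun s => v (x s))
        (grad (fun y => (1 / 2) * nsq (v y)) (x t)) t := by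
  intro t ht
  have hvd : HasFDerivAt v (fderiv ℝ v (x t)) (x t) :=
    ((hv.differentiable one_ne_zero) (x t)).hasFDerivAt
  set y := x t with hy
  set D := fderiv ℝ v y with hD
  have hVi : ∀ i : Fin 3, HasFDerivAt (fun z => v z i)
      ((ContinuousLinearMap.proj i).comp D) y := fun i =>
    (ContinuousLinearMap.proj i : ((Fin 3 → ℝ)) →L[ℝ] ℝ).hasFDerivAt.comp y hvd
  have hpd : ∀ i k : Fin 3, pd k (fun z => v z i) y = D (Pi.single k 1) i := by
    intro i k
    rw [pd, (hVi i).fderiv]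
    rfl
  have hchain : HasDerivAt (fun s => v (x s)) (D (v y)) t :=
    hvd.comp_hasDerivAt t (hx t ht)
  have hrepr : v y = ∑ i, v y i • (Pi.single i 1 : Fin 3 → ℝ) := by
    funext j
    simp [Finset.sum_apply, Pi.single_apply]
  have hDa : ∀ k, D (v y) k = ∑ i, v y i * D (Pi.single i 1) k := by
    intro k
    conv_lhs => rw [hrepr]
    simp [map_sum, map_smul]
  have hgrad : ∀ k, grad (fun z => (1/2) * nsq (v z)) y k
      = ∑ i, v y i * D (Pi.single k 1) i := by
    intro k
    have hF : HasFDerivAt (fun z => (1/2) * nsq (v z))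
        ((1/2 : ℝ) • ∑ i : Fin 3, (v y i • ((ContinuousLinearMap.proj i).comp D)
          + v y i • ((ContinuousLinearMap.proj i).comp D))) y := by
      have hs : HasFDerivAt (fun z => ∑ i : Fin 3, v z i ^ 2)
          (∑ i : Fin 3, (v y i • ((ContinuousLinearMap.proj i).comp D)
            + v y i • ((ContinuousLinearMap.proj i).comp D))) y := by
        refine HasFDerivAt.fun_sum (fun i _ => ?_)
        have := (hVi i).fun_mul (hVi i)
        simpa [pow_two] using this
      simpa [nsq] using hs.const_mul (1/2 : ℝ)
    rw [grad, pd, hF.fderiv]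
    simp [ContinuousLinearMap.sum_apply]
    rw [Finset.mul_sum]
    congr 1
    ext i
    ring
  -- rot equations
  have h0 := congrFun (hrot y) 0
  have h1 := congrFun (hrot y) 1
  have h2 := congrFun (hrot y) 2
  simp only [rot, hpd, Matrix.cons_val_zero, Matrix.cons_val_one, Matrix.head_cons,
    Matrix.cons_val_two, Matrix.tail_cons] at h0 h1 h2
  have key : grad (fun z => (1/2) * nsq (v z)) y = D (v y) := by
    funext k
    rw [hgrad, hDa]
    fin_cases k <;>
      simp only [Fin.sum_univ_three, Fin.zero_eta, Fin.mk_one, Fin.reduceFinMk, Fin.isValue] <;>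
      [linear_combination v y 1 * h2 - v y 2 * h1;
       linear_combination v y 2 * h0 - v y 0 * h2;
       linear_combination v y 0 * h1 - v y 1 * h0]
  rw [key]
  exact hchain
end
end

section
/- Let b, c ∈ ℝ³ be constant vectors with ⟨b, c⟩ = 0 and c ≠ 0. Define f(x) = ‖x‖ + ⟨x, b⟩ for x ≠ 0 and v(x) = (∇f(x) × c)/‖c‖². Let x : I → ℝ³ be a solution of ẋ = v(x) with x(t) ≠ 0 for all t ∈ I, and suppose that at some t₀ ∈ I one has ⟨x(t₀), c⟩ = 0 and f(x(t₀)) = ‖c‖². Then for all t ∈ I: ⟨x(t), c⟩ = 0, f(x(t)) = ‖c‖², and ẍ(t) = −x(t)/‖x(t)‖³, i.e. the trajectory obeys Newton's inverse-square (Kepler) equation. -/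
open Real Set

noncomputable section

/-- Euclidean norm on ℝ³. -/
def nrm (x : Fin 3 → ℝ) : ℝ := Real.sqrt (∑ i, x i ^ 2)


private lemma nsq_pos_of_ne (c : Fin 3 → ℝ) (hc : c ≠ 0) : 0 < nsq c := by
  obtain ⟨i, hi⟩ := Function.ne_iff.mp hc
  exact Finset.sum_pos' (fun j _ => sq_nonneg _)
    ⟨i, Finset.mem_univ i, lt_of_le_of_ne (sq_nonneg _) (Ne.symm (pow_ne_zero 2 hi))⟩

private theorem key0 (x0 x1 x2 b0 b1 b2 c0 c1 c2 r p0 p1 p2 q : ℝ)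
    (hr2 : r^2 = x0^2+x1^2+x2^2) (hr : 0 < r)
    (hp0 : p0 = ((x1/r + b1)*c2 - (x2/r + b2)*c1)/(c0^2+c1^2+c2^2))
    (hp1 : p1 = ((x2/r + b2)*c0 - (x0/r + b0)*c2)/(c0^2+c1^2+c2^2))
    (hp2 : p2 = ((x0/r + b0)*c1 - (x1/r + b1)*c0)/(c0^2+c1^2+c2^2))
    (hq : q = (2*x0*p0 + 2*x1*p1 + 2*x2*p2)/(2*r))
    (hxc : x0*c0+x1*c1+x2*c2 = 0) (hbc : b0*c0+b1*c1+b2*c2 = 0)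
    (hF : r + (x0*b0+x1*b1+x2*b2) = c0^2+c1^2+c2^2)
    (hcc : (c0^2+c1^2+c2^2) ≠ 0) :
    ((p1*r - x1*q)/r^2*c2 - (p2*r - x2*q)/r^2*c1)/(c0^2+c1^2+c2^2) = -x0/r^3 := by
  have hr0 : r ≠ 0 := ne_of_gt hr
  have h3 : (c0^2+c1^2+c2^2)*(x0^2+x1^2+x2^2)*b0
      = (b0*(x1*c2-x2*c1)+b1*(x2*c0-x0*c2)+b2*(x0*c1-x1*c0))*(x1*c2-x2*c1)
        + (c0^2+c1^2+c2^2)*(x0*b0+x1*b1+x2*b2)*x0 := by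
    linear_combination (b0*(x0*c0+x1*c1+x2*c2) - (x0*b0+x1*b1+x2*b2)*c0) * hxc
      + (c0*(x0^2+x1^2+x2^2) - x0*(x0*c0+x1*c1+x2*c2)) * hbc
  have hw' : p1*c2 - p2*c1 = -(x0/r + b0) := by
    have e : p1*c2 - p2*c1
        = (-((x0/r + b0)*(c0^2+c1^2+c2^2))
            + c0*((x0*c0+x1*c1+x2*c2)/r + (b0*c0+b1*c1+b2*c2)))/(c0^2+c1^2+c2^2) := by
      rw [hp1, hp2]; ring
    rw [e, hxc, hbc]
    field_simp
    ring
  have hq3 : q = (-(b0*(x1*c2-x2*c1)+b1*(x2*c0-x0*c2)+b2*(x0*c1-x1*c0)))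
      /((c0^2+c1^2+c2^2)*r) := by
    rw [hq, hp0, hp1, hp2]; field_simp; ring
  have step : ((p1*r - x1*q)/r^2*c2 - (p2*r - x2*q)/r^2*c1)/(c0^2+c1^2+c2^2)
      = ((p1*c2 - p2*c1)*r - q*(x1*c2-x2*c1))/r^2/(c0^2+c1^2+c2^2) := by ring
  rw [step, hw', hq3]
  field_simp
  linear_combination (-1)*h3 + (-(c0^2+c1^2+c2^2)*b0)*hr2
    + (-(c0^2+c1^2+c2^2)*x0)*hF

/-- Kepler motion from the Cartesian approach: for `f(x) = ‖x‖ + ⟨x,b⟩` and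
`v = (∇f × c)/‖c‖²`, the set `⟨x,c⟩ = 0, f(x) = ‖c‖²` is invariant under the flow of
`ẋ = v(x)` and on it the trajectories obey Newton's inverse-square equation. -/
theorem kepler_from_cartesian
    (b c : Fin 3 → ℝ) (hbc : dot b c = 0) (hc : c ≠ 0)
    (f : (Fin 3 → ℝ) → ℝ) (hf : ∀ x, f x = nrm x + dot x b)
    (v : (Fin 3 → ℝ) → (Fin 3 → ℝ))
    -- ∇f(x) = x/‖x‖ + b, and v = (∇f × c)/‖c‖²
    (hv : ∀ x, v x = fun k => cross (fun i => x i / nrm x + b i) c k / nsq c)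
    (t₁ t₂ : ℝ) (x : ℝ → (Fin 3 → ℝ))
    (hx0 : ∀ t ∈ Ioo t₁ t₂, x t ≠ 0)
    (hx : ∀ t ∈ Ioo t₁ t₂, HasDerivAt x (v (x t)) t)
    (t₀ : ℝ) (ht₀ : t₀ ∈ Ioo t₁ t₂)
    (h₁ : dot (x t₀) c = 0) (h₂ : f (x t₀) = nsq c) :
    ∀ t ∈ Ioo t₁ t₂,
      dot (x t) c = 0 ∧ f (x t) = nsq c ∧
      HasDerivAt (fun s => v (x s)) (fun i => -(x t i) / (nrm (x t)) ^ 3) t := by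
  have hccpos : (0:ℝ) < nsq c := nsq_pos_of_ne c hc
  have hccne : nsq c ≠ 0 := ne_of_gt hccpos
  have hxd : ∀ t ∈ Ioo t₁ t₂, ∀ i, HasDerivAt (fun s => x s i) (v (x t) i) t :=
    fun t ht i => hasDerivAt_pi.mp (hx t ht) i
  have hsumpos : ∀ t ∈ Ioo t₁ t₂, 0 < ∑ i, x t i ^ 2 := by
    intro t ht
    have := nsq_pos_of_ne (x t) (hx0 t ht)
    simpa [nsq] using this
  have hsum : ∀ t ∈ Ioo t₁ t₂,
      HasDerivAt (fun s => ∑ i, x s i ^ 2) (∑ i, 2 * x t i * v (x t) i) t := by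
    intro t ht
    apply HasDerivAt.fun_sum
    intro i _
    simpa using (hxd t ht i).fun_pow 2
  have hρ : ∀ t ∈ Ioo t₁ t₂,
      HasDerivAt (fun s => nrm (x s))
        ((∑ i, 2 * x t i * v (x t) i) / (2 * nrm (x t))) t := by
    intro t ht
    simp only [nrm]
    exact (hsum t ht).sqrt (ne_of_gt (hsumpos t ht))
  have const : ∀ g : ℝ → ℝ, (∀ t ∈ Ioo t₁ t₂, HasDerivAt g 0 t) →
      ∀ t ∈ Ioo t₁ t₂, g t = g t₀ := by
    intro g hg t ht
    apply (convex_Ioo t₁ t₂).is_const_of_fderivWithin_eq_zero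
      (fun s hs => ((hg s hs).differentiableAt).differentiableWithinAt) ?_ ht ht₀
    intro s hs
    rw [fderivWithin_of_isOpen isOpen_Ioo hs, (hg s hs).hasFDerivAt.fderiv]
    ext
    simp
  have hgd : ∀ t ∈ Ioo t₁ t₂, HasDerivAt (fun s => dot (x s) c) 0 t := by
    intro t ht
    have h1 : HasDerivAt (fun s => ∑ i, x s i * c i) (∑ i, v (x t) i * c i) t :=
      HasDerivAt.fun_sum (fun i _ => (hxd t ht i).mul_const (c i))
    have h2 : (∑ i, v (x t) i * c i) = 0 := by
      have hrne : Real.sqrt (x t 0 ^2 + x t 1 ^2 + x t 2^2) ≠ 0 := by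
        refine ne_of_gt (Real.sqrt_pos.mpr ?_)
        have := hsumpos t ht; simpa [Fin.sum_univ_three] using this
      have hccne' : c 0 ^2 + c 1^2 + c 2^2 ≠ 0 := by
        simpa [nsq, Fin.sum_univ_three] using hccne
      simp only [hv, cross, nsq, nrm, Fin.sum_univ_three, Matrix.cons_val_zero,
        Matrix.cons_val_one, Matrix.head_cons, Matrix.cons_val_two, Matrix.tail_cons]
      field_simp
      ring
    have h3 := h1
    rw [h2] at h3
    simpa [dot] using h3
  have hhd : ∀ t ∈ Ioo t₁ t₂, HasDerivAt (fun s => f (x s)) 0 t := by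
    intro t ht
    have hfun : (fun s => f (x s)) = fun s => nrm (x s) + ∑ i, x s i * b i := by
      funext s; rw [hf (x s)]; rfl
    rw [hfun]
    have h1 : HasDerivAt (fun s => ∑ i, x s i * b i) (∑ i, v (x t) i * b i) t :=
      HasDerivAt.fun_sum (fun i _ => (hxd t ht i).mul_const (b i))
    have h2 := (hρ t ht).add h1
    have h3 : (∑ i, 2 * x t i * v (x t) i) / (2 * nrm (x t)) + (∑ i, v (x t) i * b i) = 0 := by
      have hrne : Real.sqrt (x t 0 ^2 + x t 1 ^2 + x t 2^2) ≠ 0 := by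
        refine ne_of_gt (Real.sqrt_pos.mpr ?_)
        have := hsumpos t ht; simpa [Fin.sum_univ_three] using this
      have hccne' : c 0 ^2 + c 1^2 + c 2^2 ≠ 0 := by
        simpa [nsq, Fin.sum_univ_three] using hccne
      simp only [hv, cross, nsq, nrm, Fin.sum_univ_three, Matrix.cons_val_zero,
        Matrix.cons_val_one, Matrix.head_cons, Matrix.cons_val_two, Matrix.tail_cons]
      field_simp
      ring
    rw [h3] at h2
    exact h2
  have hinv1 : ∀ t ∈ Ioo t₁ t₂, dot (x t) c = 0 := by
    intro t ht
    have := const (fun s => dot (x s) c) hgd t ht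
    simpa [h₁] using this
  have hinv2 : ∀ t ∈ Ioo t₁ t₂, f (x t) = nsq c := by
    intro t ht
    have := const (fun s => f (x s)) hhd t ht
    simpa [h₂] using this
  intro t ht
  refine ⟨hinv1 t ht, hinv2 t ht, ?_⟩
  have hXc := hinv1 t ht
  have hfx := hinv2 t ht
  have hx' : ∀ i, HasDerivAt (fun s => x s i) (v (x t) i) t := hxd t ht
  have hrpos : 0 < nrm (x t) := by
    simp only [nrm]; exact Real.sqrt_pos.mpr (hsumpos t ht)
  have hrne : nrm (x t) ≠ 0 := ne_of_gt hrpos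
  have hr2 : nrm (x t) ^ 2 = x t 0^2 + x t 1^2 + x t 2^2 := by
    simp only [nrm]; rw [Real.sq_sqrt (hsumpos t ht).le, Fin.sum_univ_three]
  have hxc' : x t 0 * c 0 + x t 1 * c 1 + x t 2 * c 2 = 0 := by
    simpa [dot, Fin.sum_univ_three] using hXc
  have hbc' : b 0 * c 0 + b 1 * c 1 + b 2 * c 2 = 0 := by
    simpa [dot, Fin.sum_univ_three] using hbc
  have hccne' : c 0^2 + c 1^2 + c 2^2 ≠ 0 := by
    simpa [nsq, Fin.sum_univ_three] using hccne
  have hF' : nrm (x t) + (x t 0 * b 0 + x t 1 * b 1 + x t 2 * b 2) = c 0^2 + c 1^2 + c 2^2 := by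
    have h4 := hfx; rw [hf] at h4
    simpa [dot, nsq, Fin.sum_univ_three] using h4
  have hp0 : v (x t) 0
      = ((x t 1 / nrm (x t) + b 1) * c 2 - (x t 2 / nrm (x t) + b 2) * c 1)/(c 0^2+c 1^2+c 2^2) := by
    rw [hv]; simp [cross, nsq, Fin.sum_univ_three]
  have hp1 : v (x t) 1
      = ((x t 2 / nrm (x t) + b 2) * c 0 - (x t 0 / nrm (x t) + b 0) * c 2)/(c 0^2+c 1^2+c 2^2) := by
    rw [hv]; simp [cross, nsq, Fin.sum_univ_three]
  have hp2 : v (x t) 2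
      = ((x t 0 / nrm (x t) + b 0) * c 1 - (x t 1 / nrm (x t) + b 1) * c 0)/(c 0^2+c 1^2+c 2^2) := by
    rw [hv]; simp [cross, nsq, Fin.sum_univ_three]
  have hdiv : ∀ i : Fin 3, HasDerivAt (fun s => x s i / nrm (x s))
      ((v (x t) i * nrm (x t) - x t i * ((∑ i, 2 * x t i * v (x t) i) / (2 * nrm (x t)))) / nrm (x t) ^ 2) t :=
    fun i => (hx' i).div (hρ t ht) hrne
  have hfun : (fun s => v (x s))
      = fun s => (fun k => cross (fun i => x s i / nrm (x s) + b i) c k / nsq c) :=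
    funext fun s => hv (x s)
  rw [hfun]
  apply hasDerivAt_pi.mpr
  intro k
  set q : ℝ := (∑ i, 2 * x t i * v (x t) i) / (2 * nrm (x t)) with hqdef
  have comp0 : HasDerivAt
      (fun s => ((x s 1 / nrm (x s) + b 1) * c 2 - (x s 2 / nrm (x s) + b 2) * c 1) / nsq c)
      (((v (x t) 1 * nrm (x t) - x t 1 * q) / nrm (x t) ^ 2 * c 2
        - (v (x t) 2 * nrm (x t) - x t 2 * q) / nrm (x t) ^ 2 * c 1) / nsq c) t :=
    ((((hdiv 1).add_const (b 1)).mul_const (c 2)).sub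
      (((hdiv 2).add_const (b 2)).mul_const (c 1))).div_const (nsq c)
  have comp1 : HasDerivAt
      (fun s => ((x s 2 / nrm (x s) + b 2) * c 0 - (x s 0 / nrm (x s) + b 0) * c 2) / nsq c)
      (((v (x t) 2 * nrm (x t) - x t 2 * q) / nrm (x t) ^ 2 * c 0
        - (v (x t) 0 * nrm (x t) - x t 0 * q) / nrm (x t) ^ 2 * c 2) / nsq c) t :=
    ((((hdiv 2).add_const (b 2)).mul_const (c 0)).sub
      (((hdiv 0).add_const (b 0)).mul_const (c 2))).div_const (nsq c)
  have comp2 : HasDerivAt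
      (fun s => ((x s 0 / nrm (x s) + b 0) * c 1 - (x s 1 / nrm (x s) + b 1) * c 0) / nsq c)
      (((v (x t) 0 * nrm (x t) - x t 0 * q) / nrm (x t) ^ 2 * c 1
        - (v (x t) 1 * nrm (x t) - x t 1 * q) / nrm (x t) ^ 2 * c 0) / nsq c) t :=
    ((((hdiv 0).add_const (b 0)).mul_const (c 1)).sub
      (((hdiv 1).add_const (b 1)).mul_const (c 0))).div_const (nsq c)
  have hqe : q = (2 * x t 0 * v (x t) 0 + 2 * x t 1 * v (x t) 1 + 2 * x t 2 * v (x t) 2)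
      / (2 * nrm (x t)) := by rw [hqdef, Fin.sum_univ_three]
  fin_cases k
  · simp only [cross, Matrix.cons_val_zero, Matrix.cons_val_one, Matrix.head_cons,
      Matrix.cons_val_two, Matrix.tail_cons, Fin.mk_zero, Fin.mk_one, Fin.isValue,
      show (⟨2, by norm_num⟩ : Fin 3) = 2 from rfl]
    refine comp0.congr_deriv ?_
    simp only [nsq, Fin.sum_univ_three]
    linear_combination (1 : ℝ) * key0 (x t 0) (x t 1) (x t 2) (b 0) (b 1) (b 2)
      (c 0) (c 1) (c 2) (nrm (x t)) (v (x t) 0) (v (x t) 1) (v (x t) 2) q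
      hr2 hrpos hp0 hp1 hp2 hqe hxc' hbc' hF' hccne'
  · simp only [cross, Matrix.cons_val_zero, Matrix.cons_val_one, Matrix.head_cons,
      Matrix.cons_val_two, Matrix.tail_cons, Fin.mk_zero, Fin.mk_one, Fin.isValue,
      show (⟨2, by norm_num⟩ : Fin 3) = 2 from rfl]
    refine comp1.congr_deriv ?_
    simp only [nsq, Fin.sum_univ_three]
    linear_combination (1 : ℝ) * key0 (x t 1) (x t 2) (x t 0) (b 1) (b 2) (b 0)
      (c 1) (c 2) (c 0) (nrm (x t)) (v (x t) 1) (v (x t) 2) (v (x t) 0) q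
      (by linear_combination hr2) hrpos
      (by rw [hp1]; ring) (by rw [hp2]; ring) (by rw [hp0]; ring)
      (by rw [hqe]; ring) (by linear_combination hxc') (by linear_combination hbc')
      (by linear_combination hF')
      (by intro h; exact hccne' (by linear_combination h))
  · simp only [cross, Matrix.cons_val_zero, Matrix.cons_val_one, Matrix.head_cons,
      Matrix.cons_val_two, Matrix.tail_cons, Fin.mk_zero, Fin.mk_one, Fin.isValue,
      show (⟨2, by norm_num⟩ : Fin 3) = 2 from rfl]
    refine comp2.congr_deriv ?_
    simp only [nsq, Fin.sum_univ_three]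
    linear_combination (1 : ℝ) * key0 (x t 2) (x t 0) (x t 1) (b 2) (b 0) (b 1)
      (c 2) (c 0) (c 1) (nrm (x t)) (v (x t) 2) (v (x t) 0) (v (x t) 1) q
      (by linear_combination hr2) hrpos
      (by rw [hp2]; ring) (by rw [hp0]; ring) (by rw [hp1]; ring)
      (by rw [hqe]; ring) (by linear_combination hxc') (by linear_combination hbc')
      (by linear_combination hF')
      (by intro h; exact hccne' (by linear_combination h))
end
end

section
/- Let I₁, I₂ > 0 and h ∈ ℝ. Let μ₁, μ₂ : ℝ³ → ℝ be C¹ functions of γ = (γ₁, γ₂, γ₃) satisfying the linear partial differential equation γ₃ (∂_{γ₂} μ₁ − ∂_{γ₁} μ₂) − γ₂ ∂_{γ₃} μ₁ + γ₁ ∂_{γ₃} μ₂ = 0 on ℝ³, and set U(γ) = (I₁ μ₁(γ)² + I₂ μ₂(γ)²)/(2 I₁ I₂) − h. Suppose (ω₁, ω₂, γ) : I → ℝ² × ℝ³ is a solution of the Suslov system I₁ ω̇₁ = γ₃ ∂_{γ₂}U(γ) − γ₂ ∂_{γ₃}U(γ), I₂ ω̇₂ = γ₁ ∂_{γ₃}U(γ)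 − γ₃ ∂_{γ₁}U(γ), γ̇₁ = −γ₃ ω₂, γ̇₂ = γ₃ ω₁, γ̇₃ = γ₁ ω₂ − γ₂ ω₁ on an open interval I, and that at some t₀ ∈ I: I₁ ω₁(t₀) = μ₂(γ(t₀)) and I₂ ω₂(t₀) = −μ₁(γ(t₀)). Then I₁ ω₁(t) = μ₂(γ(t)) and I₂ ω₂(t) = −μ₁(γ(t)) for all t ∈ I; i.e. the relations I₁ω₁ − μ₂ = 0 and I₂ω₂ + μ₁ = 0 are invariant relations (first integrals) of the Suslov system. -/
open Real Set

noncomputable section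

/-- chain rule along a curve in `ℝ³`. -/
lemma suslov_chain (μ : (Fin 3 → ℝ) → ℝ) (hμ : ContDiff ℝ 1 μ)
    (γ : ℝ → Fin 3 → ℝ) (t : ℝ) (d₀ d₁ d₂ : ℝ)
    (h0 : HasDerivAt (fun s => γ s 0) d₀ t)
    (h1 : HasDerivAt (fun s => γ s 1) d₁ t)
    (h2 : HasDerivAt (fun s => γ s 2) d₂ t) :
    HasDerivAt (fun s => μ (γ s))
      (pd 0 μ (γ t) * d₀ + pd 1 μ (γ t) * d₁ + pd 2 μ (γ t) * d₂) t := by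
  have hγ : HasDerivAt γ (![d₀, d₁, d₂]) t := by
    rw [hasDerivAt_pi]
    intro i
    fin_cases i <;> simpa
  have hF := (hμ.differentiable one_ne_zero (γ t)).hasFDerivAt
  have hcomp := hF.comp_hasDerivAt t hγ
  refine hcomp.congr_deriv (Eq.symm ?_)
  have hv : (![d₀, d₁, d₂] : Fin 3 → ℝ) =
      d₀ • (Pi.single 0 1 : Fin 3 → ℝ) + d₁ • (Pi.single 1 1 : Fin 3 → ℝ) + d₂ • (Pi.single 2 1 : Fin 3 → ℝ) := by
    funext i; fin_cases i <;> simp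
  rw [hv, map_add, map_add, map_smul, map_smul, map_smul]
  simp [pd, mul_comm]

/-- partial derivatives of the Suslov potential. -/
lemma suslov_pdU (I₁ I₂ h : ℝ) (hI₁ : I₁ ≠ 0) (hI₂ : I₂ ≠ 0)
    (μ₁ μ₂ : (Fin 3 → ℝ) → ℝ) (hμ₁ : ContDiff ℝ 1 μ₁) (hμ₂ : ContDiff ℝ 1 μ₂)
    (U : (Fin 3 → ℝ) → ℝ)
    (hU : ∀ γ, U γ = (I₁ * μ₁ γ ^ 2 + I₂ * μ₂ γ ^ 2) / (2 * I₁ * I₂) - h)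
    (k : Fin 3) (x : Fin 3 → ℝ) :
    pd k U x = μ₁ x * pd k μ₁ x / I₂ + μ₂ x * pd k μ₂ x / I₁ := by
  have hUeq : U = fun y =>
      (2 * I₁ * I₂)⁻¹ * (I₁ * (μ₁ y * μ₁ y) + I₂ * (μ₂ y * μ₂ y)) - h := by
    funext y; rw [hU y]; ring
  subst hUeq
  have h1 := (hμ₁.differentiable one_ne_zero x).hasFDerivAt
  have h2 := (hμ₂.differentiable one_ne_zero x).hasFDerivAt
  have hA : HasFDerivAt
      (fun y => (2 * I₁ * I₂)⁻¹ * (I₁ * (μ₁ y * μ₁ y) + I₂ * (μ₂ y * μ₂ y)) - h)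
      ((2 * I₁ * I₂)⁻¹ •
        (I₁ • (μ₁ x • fderiv ℝ μ₁ x + μ₁ x • fderiv ℝ μ₁ x) +
         I₂ • (μ₂ x • fderiv ℝ μ₂ x + μ₂ x • fderiv ℝ μ₂ x))) x :=
    ((((h1.mul h1).const_mul I₁).add ((h2.mul h2).const_mul I₂)).const_mul
      ((2 * I₁ * I₂)⁻¹)).sub_const h
  have := hA.fderiv
  simp only [pd, this, ContinuousLinearMap.smul_apply, ContinuousLinearMap.add_apply]
  field_simp
  linear_combination (I₂ * (fderiv ℝ μ₂ x) (Pi.single k 1) * μ₂ x + I₁ * (fderiv ℝ μ₁ x) (Pi.single k 1) * μ₁ x) * (I₂ * I₂⁻¹ * mul_inv_cancel₀ hI₁ + mul_inv_cancel₀ hI₂)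

/-- Suslov problem: with the potential `U = (I₁μ₁² + I₂μ₂²)/(2I₁I₂) − h` built from
solutions μ₁, μ₂ of the PDE (4), the relations `I₁ω₁ − μ₂ = 0`, `I₂ω₂ + μ₁ = 0` are
invariant relations of the reduced Euler–Poisson equations. -/
theorem suslov_invariant_relations
    (I₁ I₂ h : ℝ) (hI₁ : 0 < I₁) (hI₂ : 0 < I₂)
    (μ₁ μ₂ : (Fin 3 → ℝ) → ℝ)
    (hμ₁ : ContDiff ℝ 1 μ₁) (hμ₂ : ContDiff ℝ 1 μ₂)
    -- the PDE  γ₃(∂_{γ₂}μ₁ − ∂_{γ₁}μ₂) − γ₂ ∂_{γ₃}μ₁ + γ₁ ∂_{γ₃}μ₂ = 0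
    (hpde : ∀ γ : Fin 3 → ℝ,
      γ 2 * (pd 1 μ₁ γ - pd 0 μ₂ γ) - γ 1 * pd 2 μ₁ γ + γ 0 * pd 2 μ₂ γ = 0)
    (U : (Fin 3 → ℝ) → ℝ)
    (hU : ∀ γ, U γ = (I₁ * μ₁ γ ^ 2 + I₂ * μ₂ γ ^ 2) / (2 * I₁ * I₂) - h)
    -- a solution of the Suslov system on an open interval
    (t₁ t₂ : ℝ) (ω₁ ω₂ : ℝ → ℝ) (γ : ℝ → (Fin 3 → ℝ))
    (hω₁ : ∀ t ∈ Ioo t₁ t₂,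
      HasDerivAt ω₁ ((γ t 2 * pd 1 U (γ t) - γ t 1 * pd 2 U (γ t)) / I₁) t)
    (hω₂ : ∀ t ∈ Ioo t₁ t₂,
      HasDerivAt ω₂ ((γ t 0 * pd 2 U (γ t) - γ t 2 * pd 0 U (γ t)) / I₂) t)
    (hγ₁ : ∀ t ∈ Ioo t₁ t₂, HasDerivAt (fun s => γ s 0) (-(γ t 2 * ω₂ t)) t)
    (hγ₂ : ∀ t ∈ Ioo t₁ t₂, HasDerivAt (fun s => γ s 1) (γ t 2 * ω₁ t) t)
    (hγ₃ : ∀ t ∈ Ioo t₁ t₂, HasDerivAt (fun s => γ s 2) (γ t 0 * ω₂ t - γ t 1 * ω₁ t) t)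
    -- the relations hold at some instant t₀
    (t₀ : ℝ) (ht₀ : t₀ ∈ Ioo t₁ t₂)
    (h₁ : I₁ * ω₁ t₀ = μ₂ (γ t₀)) (h₂ : I₂ * ω₂ t₀ = -μ₁ (γ t₀)) :
    ∀ t ∈ Ioo t₁ t₂, I₁ * ω₁ t = μ₂ (γ t) ∧ I₂ * ω₂ t = -μ₁ (γ t) := by
  have hI₁' : I₁ ≠ 0 := ne_of_gt hI₁
  have hI₂' : I₂ ≠ 0 := ne_of_gt hI₂
  -- coefficient functions
  set P : ℝ → ℝ := fun u => (γ u 1 * pd 2 μ₂ (γ u) - γ u 2 * pd 1 μ₂ (γ u)) / I₁ with hP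
  set Q : ℝ → ℝ := fun u => (γ u 2 * pd 0 μ₂ (γ u) - γ u 0 * pd 2 μ₂ (γ u)) / I₂ with hQ
  set R : ℝ → ℝ := fun u => (γ u 2 * pd 1 μ₁ (γ u) - γ u 1 * pd 2 μ₁ (γ u)) / I₁ with hR
  set S : ℝ → ℝ := fun u => (γ u 0 * pd 2 μ₁ (γ u) - γ u 2 * pd 0 μ₁ (γ u)) / I₂ with hS
  set f : ℝ → ℝ × ℝ := fun s => (I₁ * ω₁ s - μ₂ (γ s), I₂ * ω₂ s + μ₁ (γ s)) with hfdef
  -- continuity of γ on the interval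
  have hγc : ContinuousOn γ (Ioo t₁ t₂) := by
    intro u hu
    apply ContinuousAt.continuousWithinAt
    rw [continuousAt_pi]
    intro i
    fin_cases i
    · exact (hγ₁ u hu).continuousAt
    · exact (hγ₂ u hu).continuousAt
    · exact (hγ₃ u hu).continuousAt
  have hγic : ∀ i : Fin 3, ContinuousOn (fun u => γ u i) (Ioo t₁ t₂) := fun i =>
    (continuous_apply i).comp_continuousOn hγc
  have hpdc : ∀ (i : Fin 3) (μ : (Fin 3 → ℝ) → ℝ), ContDiff ℝ 1 μ →
      ContinuousOn (fun u => pd i μ (γ u)) (Ioo t₁ t₂) := by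
    intro i μ hμ
    exact ((hμ.continuous_fderiv one_ne_zero).comp_continuousOn hγc).clm_apply continuousOn_const
  have hPc : ContinuousOn P (Ioo t₁ t₂) :=
    (((hγic 1).mul (hpdc 2 μ₂ hμ₂)).sub ((hγic 2).mul (hpdc 1 μ₂ hμ₂))).div_const I₁
  have hQc : ContinuousOn Q (Ioo t₁ t₂) :=
    (((hγic 2).mul (hpdc 0 μ₂ hμ₂)).sub ((hγic 0).mul (hpdc 2 μ₂ hμ₂))).div_const I₂
  have hRc : ContinuousOn R (Ioo t₁ t₂) :=
    (((hγic 2).mul (hpdc 1 μ₁ hμ₁)).sub ((hγic 1).mul (hpdc 2 μ₁ hμ₁))).div_const I₁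
  have hSc : ContinuousOn S (Ioo t₁ t₂) :=
    (((hγic 0).mul (hpdc 2 μ₁ hμ₁)).sub ((hγic 2).mul (hpdc 0 μ₁ hμ₁))).div_const I₂
  -- the derivative of f
  have hf' : ∀ u ∈ Ioo t₁ t₂, HasDerivAt f
      (P u * (f u).1 + Q u * (f u).2, R u * (f u).1 + S u * (f u).2) u := by
    intro u hu
    have hc1 := suslov_chain μ₁ hμ₁ γ u _ _ _ (hγ₁ u hu) (hγ₂ u hu) (hγ₃ u hu)
    have hc2 := suslov_chain μ₂ hμ₂ γ u _ _ _ (hγ₁ u hu) (hγ₂ u hu) (hγ₃ u hu)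
    have e1 : HasDerivAt (fun s => I₁ * ω₁ s - μ₂ (γ s))
        (P u * (f u).1 + Q u * (f u).2) u := by
      have hw := ((hω₁ u hu).const_mul I₁).sub hc2
      refine hw.congr_deriv (Eq.symm ?_)
      simp only [hfdef, hP, hQ]
      rw [suslov_pdU I₁ I₂ h hI₁' hI₂' μ₁ μ₂ hμ₁ hμ₂ U hU 1 (γ u),
        suslov_pdU I₁ I₂ h hI₁' hI₂' μ₁ μ₂ hμ₁ hμ₂ U hU 2 (γ u)]
      field_simp
      linear_combination (-(μ₁ (γ u)) * I₁) * hpde (γ u)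
    have e2 : HasDerivAt (fun s => I₂ * ω₂ s + μ₁ (γ s))
        (R u * (f u).1 + S u * (f u).2) u := by
      have hw := ((hω₂ u hu).const_mul I₂).add hc1
      refine hw.congr_deriv (Eq.symm ?_)
      simp only [hfdef, hR, hS]
      rw [suslov_pdU I₁ I₂ h hI₁' hI₂' μ₁ μ₂ hμ₁ hμ₂ U hU 0 (γ u),
        suslov_pdU I₁ I₂ h hI₁' hI₂' μ₁ μ₂ hμ₁ hμ₂ U hU 2 (γ u)]
      field_simp
      linear_combination (-(μ₂ (γ u)) * I₂) * hpde (γ u)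
    exact e1.prodMk e2
  -- main argument
  intro t ht
  set a : ℝ := (t₁ + min t t₀) / 2 with hadef
  set b : ℝ := (max t t₀ + t₂) / 2 with hbdef
  have hat : a < min t t₀ := by
    have h1 : t₁ < min t t₀ := lt_min ht.1 ht₀.1
    simp only [hadef]; linarith
  have htb : max t t₀ < b := by
    have h1 : max t t₀ < t₂ := max_lt ht.2 ht₀.2
    simp only [hbdef]; linarith
  have hab : a < b := lt_trans (lt_of_lt_of_le hat (min_le_left _ _))
    (lt_of_le_of_lt (le_max_left _ _) htb)
  have hsub : Icc a b ⊆ Ioo t₁ t₂ := by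
    intro u hu
    constructor
    · calc t₁ < a := by
            have : t₁ < min t t₀ := lt_min ht.1 ht₀.1
            simp only [hadef]; linarith
        _ ≤ u := hu.1
    · calc u ≤ b := hu.2
        _ < t₂ := by
            have : max t t₀ < t₂ := max_lt ht.2 ht₀.2
            simp only [hbdef]; linarith
  have htmem : t ∈ Ioo a b :=
    ⟨lt_of_lt_of_le hat (min_le_left _ _), lt_of_le_of_lt (le_max_left _ _) htb⟩
  have ht₀mem : t₀ ∈ Ioo a b :=
    ⟨lt_of_lt_of_le hat (min_le_right _ _), lt_of_le_of_lt (le_max_right _ _) htb⟩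
  -- bound on the coefficients
  set N : ℝ → ℝ := fun u => |P u| + |Q u| + |R u| + |S u| with hN
  have hNc : ContinuousOn N (Icc a b) :=
    ((((hPc.abs.add hQc.abs).add hRc.abs).add hSc.abs)).mono hsub
  obtain ⟨C, hC⟩ := isCompact_Icc.exists_bound_of_continuousOn hNc
  have hC' : ∀ u ∈ Icc a b, N u ≤ C := fun u hu =>
    le_trans (le_abs_self _) (hC u hu)
  have hC0 : 0 ≤ C := by
    have := hC' a ⟨le_rfl, hab.le⟩
    have h0 : 0 ≤ N a := by positivity
    linarith
  -- clamped vector field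
  set τ : ℝ → ℝ := fun u => max a (min u b) with hτ
  have hτmem : ∀ u, τ u ∈ Icc a b := fun u =>
    ⟨le_max_left _ _, max_le hab.le (min_le_right _ _)⟩
  have hτeq : ∀ u ∈ Icc a b, τ u = u := by
    intro u hu
    simp only [hτ]
    rw [min_eq_left hu.2, max_eq_right hu.1]
  set v : ℝ → ℝ × ℝ → ℝ × ℝ := fun u x =>
    (P (τ u) * x.1 + Q (τ u) * x.2, R (τ u) * x.1 + S (τ u) * x.2) with hv
  have hlip : ∀ u, LipschitzOnWith C.toNNReal (v u) univ := by
    intro u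
    apply LipschitzWith.lipschitzOnWith
    apply LipschitzWith.of_dist_le_mul
    intro x y
    have hb := hC' (τ u) (hτmem u)
    have h1 : dist x.1 y.1 ≤ dist x y := by
      rw [Prod.dist_eq]; exact le_max_left _ _
    have h2 : dist x.2 y.2 ≤ dist x y := by
      rw [Prod.dist_eq]; exact le_max_right _ _
    have hd0 : 0 ≤ dist x y := dist_nonneg
    have hP0 : 0 ≤ |P (τ u)| := abs_nonneg _
    have hQ0 : 0 ≤ |Q (τ u)| := abs_nonneg _
    have hR0 : 0 ≤ |R (τ u)| := abs_nonneg _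
    have hS0 : 0 ≤ |S (τ u)| := abs_nonneg _
    have key : ∀ p q : ℝ, 0 ≤ p → 0 ≤ q →
        |p * (x.1 - y.1)| ≤ p * dist x y → True := fun _ _ _ _ _ => trivial
    rw [Real.coe_toNNReal C hC0, Prod.dist_eq]
    apply max_le
    · simp only [hv]
      have e : P (τ u) * x.1 + Q (τ u) * x.2 - (P (τ u) * y.1 + Q (τ u) * y.2)
          = P (τ u) * (x.1 - y.1) + Q (τ u) * (x.2 - y.2) := by ring
      rw [Real.dist_eq, e]
      calc |P (τ u) * (x.1 - y.1) + Q (τ u) * (x.2 - y.2)|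
          ≤ |P (τ u) * (x.1 - y.1)| + |Q (τ u) * (x.2 - y.2)| := abs_add_le _ _
        _ = |P (τ u)| * |x.1 - y.1| + |Q (τ u)| * |x.2 - y.2| := by
            rw [abs_mul, abs_mul]
        _ ≤ C * dist x y := by
            have hx1 : |x.1 - y.1| ≤ dist x y := by rw [← Real.dist_eq]; exact h1
            have hx2 : |x.2 - y.2| ≤ dist x y := by rw [← Real.dist_eq]; exact h2
            have hNle : |P (τ u)| + |Q (τ u)| ≤ C := by
              have := hb; simp only [hN] at this; linarith
            nlinarith [mul_le_mul_of_nonneg_left hx1 hP0,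
              mul_le_mul_of_nonneg_left hx2 hQ0]
    · simp only [hv]
      have e : R (τ u) * x.1 + S (τ u) * x.2 - (R (τ u) * y.1 + S (τ u) * y.2)
          = R (τ u) * (x.1 - y.1) + S (τ u) * (x.2 - y.2) := by ring
      rw [Real.dist_eq, e]
      calc |R (τ u) * (x.1 - y.1) + S (τ u) * (x.2 - y.2)|
          ≤ |R (τ u) * (x.1 - y.1)| + |S (τ u) * (x.2 - y.2)| := abs_add_le _ _
        _ = |R (τ u)| * |x.1 - y.1| + |S (τ u)| * |x.2 - y.2| := by
            rw [abs_mul, abs_mul]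
        _ ≤ C * dist x y := by
            have hx1 : |x.1 - y.1| ≤ dist x y := by rw [← Real.dist_eq]; exact h1
            have hx2 : |x.2 - y.2| ≤ dist x y := by rw [← Real.dist_eq]; exact h2
            have hNle : |R (τ u)| + |S (τ u)| ≤ C := by
              have := hb; simp only [hN] at this; linarith
            nlinarith [mul_le_mul_of_nonneg_left hx1 hR0,
              mul_le_mul_of_nonneg_left hx2 hS0]
  -- apply uniqueness
  have key : EqOn f (fun _ => ((0 : ℝ), (0 : ℝ))) (Ioo a b) := by
    apply ODE_solution_unique_of_mem_Ioo (s := fun _ => univ) (fun u _ => hlip u) ht₀mem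
    · intro u hu
      refine ⟨?_, mem_univ _⟩
      have := hf' u (hsub (Ioo_subset_Icc_self hu))
      have heqτ : τ u = u := hτeq u (Ioo_subset_Icc_self hu)
      simp only [hv, heqτ]
      exact this
    · intro u hu
      refine ⟨?_, mem_univ _⟩
      have : v u ((0 : ℝ), (0 : ℝ)) = ((0 : ℝ), (0 : ℝ)) := by
        simp [hv]
      rw [this]
      exact hasDerivAt_const u _
    · have : f t₀ = (0, 0) := by
        simp only [hfdef, Prod.mk.injEq]
        constructor <;> linarith
      exact this
  have hft := key htmem
  simp only [hfdef, Prod.mk.injEq] at hft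
  constructor <;> linarith [hft.1, hft.2]
end
end

section
/- Let p₁, p₂, p₃ : ℝ³ → ℝ be C¹ functions, let a, b, c : ℝ³ → ℝ be arbitrary functions, and let D : ℝ³ → ℝ be a positive function. Define Λ₁ = (∂₂p₁ − ∂₁p₂) b + (∂₃p₁ − ∂₁p₃) c, Λ₂ = (∂₃p₂ − ∂₂p₃) c + (∂₁p₂ − ∂₂p₁) a, Λ₃ = (∂₂p₃ − ∂₃p₂) b + (∂₁p₃ − ∂₃p₁) a, let ṽ = (a, b, c) and let rot ṽ = (1/√D) (∂₂p₃ − ∂₃p₂, ∂₃p₁ − ∂₁p₃, ∂₁p₂ − ∂₂p₁). Then at every point x ∈ ℝ³: Λ₁(x) = Λ₂(x) = Λ₃(x) = 0 if and only if ṽ(x) × rot ṽ(x) = 0, i.e. ṽ is a Kummer vector field. -/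
open Real Set

noncomputable section

/-- Rattleback proposition: the conditions `Λ₁ = Λ₂ = Λ₃ = 0` hold at a point iff the
reduced Cartesian field `ṽ = (a,b,c)` is parallel to its metric curl there, i.e. `ṽ` is
a Kummer vector field. -/
theorem rattleback_kummer
    (p₁ p₂ p₃ : (Fin 3 → ℝ) → ℝ)
    (hp₁ : ContDiff ℝ 1 p₁) (hp₂ : ContDiff ℝ 1 p₂) (hp₃ : ContDiff ℝ 1 p₃)
    (a b c : (Fin 3 → ℝ) → ℝ)
    (D : (Fin 3 → ℝ) → ℝ) (hD : ∀ x, 0 < D x)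
    (Λ₁ Λ₂ Λ₃ : (Fin 3 → ℝ) → ℝ)
    (hΛ₁ : ∀ x, Λ₁ x = (pd 1 p₁ x - pd 0 p₂ x) * b x + (pd 2 p₁ x - pd 0 p₃ x) * c x)
    (hΛ₂ : ∀ x, Λ₂ x = (pd 2 p₂ x - pd 1 p₃ x) * c x + (pd 0 p₂ x - pd 1 p₁ x) * a x)
    (hΛ₃ : ∀ x, Λ₃ x = (pd 1 p₃ x - pd 2 p₂ x) * b x + (pd 0 p₃ x - pd 2 p₁ x) * a x)
    (vt : (Fin 3 → ℝ) → (Fin 3 → ℝ)) (hvt : ∀ x, vt x = ![a x, b x, c x])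
    (rotvt : (Fin 3 → ℝ) → (Fin 3 → ℝ))
    (hrot : ∀ x, rotvt x = (1 / Real.sqrt (D x)) •
      ![pd 1 p₃ x - pd 2 p₂ x, pd 2 p₁ x - pd 0 p₃ x, pd 0 p₂ x - pd 1 p₁ x]) :
    ∀ x, (Λ₁ x = 0 ∧ Λ₂ x = 0 ∧ Λ₃ x = 0) ↔ cross (vt x) (rotvt x) = 0 := by
  intro x
  have hs : Real.sqrt (D x) ≠ 0 := ne_of_gt (Real.sqrt_pos.mpr (hD x))
  rw [hΛ₁ x, hΛ₂ x, hΛ₃ x, hvt x, hrot x]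
  constructor
  · rintro ⟨h1, h2, h3⟩
    funext i
    fin_cases i
    · simp only [cross, Pi.smul_apply, smul_eq_mul, Matrix.cons_val_zero,
        Matrix.cons_val_one, Matrix.head_cons, Matrix.cons_val_fin_one, Pi.zero_apply,
        Matrix.cons_val']
      show b x * ((1 / Real.sqrt (D x)) * (pd 0 p₂ x - pd 1 p₁ x)) -
        c x * ((1 / Real.sqrt (D x)) * (pd 2 p₁ x - pd 0 p₃ x)) = 0
      linear_combination (-(1 / Real.sqrt (D x))) * h1
    · simp only [cross, Pi.smul_apply, smul_eq_mul, Matrix.cons_val_zero,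
        Matrix.cons_val_one, Matrix.head_cons, Matrix.cons_val_fin_one, Pi.zero_apply,
        Matrix.cons_val']
      show c x * ((1 / Real.sqrt (D x)) * (pd 1 p₃ x - pd 2 p₂ x)) -
        a x * ((1 / Real.sqrt (D x)) * (pd 0 p₂ x - pd 1 p₁ x)) = 0
      linear_combination (-(1 / Real.sqrt (D x))) * h2
    · simp only [cross, Pi.smul_apply, smul_eq_mul, Matrix.cons_val_zero,
        Matrix.cons_val_one, Matrix.head_cons, Matrix.cons_val_fin_one, Pi.zero_apply,
        Matrix.cons_val']
      show a x * ((1 / Real.sqrt (D x)) * (pd 2 p₁ x - pd 0 p₃ x)) -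
        b x * ((1 / Real.sqrt (D x)) * (pd 1 p₃ x - pd 2 p₂ x)) = 0
      linear_combination (-(1 / Real.sqrt (D x))) * h3
  · intro h
    have h0 := congrFun h 0
    have h1 := congrFun h 1
    have h2 := congrFun h 2
    simp only [cross, Pi.smul_apply, smul_eq_mul, Matrix.cons_val_zero,
      Matrix.cons_val_one, Matrix.head_cons, Pi.zero_apply, Matrix.cons_val_two,
      Matrix.tail_cons] at h0 h1 h2
    field_simp at h0 h1 h2
    refine ⟨by linarith, by linarith, by linarith⟩
end
end

section
/- Let f, Φ : ℝ³ → ℝ be C² with ∇f(x) ≠ 0 for every x, let G : ℝ² → ℝ be C², and define g = ‖∇f‖², γ = ⟨∇f, ∇Φ⟩ / g, α(x) = (∂₁G)(f(x), Φ(x)), and v = α (∇Φ − γ ∇f). Then every solution x : I → ℝ³ of ẋ = v(x) satisfies: (i) f(x(t)) is constant on I (the particle stays on the surface f = c); and (ii) for every t ∈ I, the vector ẍ(t) − ∇(½‖v‖²)(x(t)) is a scalar multiple of ∇f(x(t)) (the reaction force is normal to the surface). -/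
open Real Set

noncomputable section

lemma clm_apply_eq_sum (L : (Fin 3 → ℝ) →L[ℝ] ℝ) (w : Fin 3 → ℝ) :
    L w = ∑ i, w i * L (Pi.single i 1) := by
  have h := L.toLinearMap.pi_apply_eq_sum_univ w
  simp only [ContinuousLinearMap.coe_coe, smul_eq_mul] at h
  rw [h]
  refine Finset.sum_congr rfl fun i _ => ?_
  have : (fun j => if i = j then (1:ℝ) else 0) = Pi.single i 1 := by
    ext j; simp [Pi.single_apply, eq_comm]
  rw [this]

lemma nsq_eq_zero {a : Fin 3 → ℝ} : nsq a = 0 ↔ a = 0 := by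
  unfold nsq
  rw [Finset.sum_eq_zero_iff_of_nonneg (fun i _ => sq_nonneg _)]
  constructor
  · intro h; funext i; simpa [pow_eq_zero_iff] using h i (Finset.mem_univ i)
  · intro h i _; simp [h]

lemma pd_mul {u w : (Fin 3 → ℝ) → ℝ} {x : Fin 3 → ℝ} (hu : DifferentiableAt ℝ u x)
    (hw : DifferentiableAt ℝ w x) (k : Fin 3) :
    pd k (fun z => u z * w z) x = pd k u x * w x + u x * pd k w x := by
  unfold pd
  rw [fderiv_fun_mul hu hw]
  simp [smul_eq_mul]; ring

lemma pd_sub {u w : (Fin 3 → ℝ) → ℝ} {x : Fin 3 → ℝ} (hu : DifferentiableAt ℝ u x)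
    (hw : DifferentiableAt ℝ w x) (k : Fin 3) :
    pd k (fun z => u z - w z) x = pd k u x - pd k w x := by
  unfold pd
  rw [fderiv_fun_sub hu hw]; simp

lemma pd_const_mul {u : (Fin 3 → ℝ) → ℝ} {x : Fin 3 → ℝ} (c : ℝ) (hu : DifferentiableAt ℝ u x)
    (k : Fin 3) : pd k (fun z => c * u z) x = c * pd k u x := by
  unfold pd
  rw [fderiv_const_mul hu]; simp

lemma pd_sum {u : Fin 3 → (Fin 3 → ℝ) → ℝ} {x : Fin 3 → ℝ}
    (hu : ∀ i, DifferentiableAt ℝ (u i) x) (k : Fin 3) :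
    pd k (fun z => ∑ i, u i z) x = ∑ i, pd k (u i) x := by
  unfold pd
  rw [fderiv_fun_sum (fun i _ => hu i)]; simp

lemma grad_contDiff {f : (Fin 3 → ℝ) → ℝ} (hf : ContDiff ℝ 2 f) : ContDiff ℝ 1 (grad f) := by
  rw [contDiff_pi]
  intro k
  exact (ContinuousLinearMap.apply ℝ ℝ (Pi.single k 1)).contDiff.comp
    (hf.fderiv_right (m := 1) (by norm_num))

lemma hasFDerivAt_grad_comp {f : (Fin 3 → ℝ) → ℝ} (hf : ContDiff ℝ 2 f) (y : Fin 3 → ℝ)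
    (k : Fin 3) :
    HasFDerivAt (fun z => grad f z k)
      ((ContinuousLinearMap.apply ℝ ℝ (Pi.single k 1)).comp
        (fderiv ℝ (fderiv ℝ f) y)) y := by
  have hFd : DifferentiableAt ℝ (fderiv ℝ f) y :=
    ((hf.fderiv_right (m := 1) (by norm_num)).differentiable (by norm_num)).differentiableAt
  exact (ContinuousLinearMap.apply ℝ ℝ (Pi.single k 1)).hasFDerivAt.comp y hFd.hasFDerivAt

lemma pd_grad_eq {f : (Fin 3 → ℝ) → ℝ} (hf : ContDiff ℝ 2 f) (y : Fin 3 → ℝ) (i k : Fin 3) :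
    pd i (fun z => grad f z k) y = fderiv ℝ (fderiv ℝ f) y (Pi.single i 1) (Pi.single k 1) := by
  unfold pd
  rw [(hasFDerivAt_grad_comp hf y k).fderiv]
  rfl

lemma pd_symm {f : (Fin 3 → ℝ) → ℝ} (hf : ContDiff ℝ 2 f) (y : Fin 3 → ℝ) (i k : Fin 3) :
    pd i (fun z => grad f z k) y = pd k (fun z => grad f z i) y := by
  rw [pd_grad_eq hf, pd_grad_eq hf]
  exact hf.contDiffAt.isSymmSndFDerivAt (by simp [minSmoothness_of_isRCLikeNormedField]) _ _

lemma hasDerivAt_comp_curve {u : (Fin 3 → ℝ) → ℝ} {x : ℝ → Fin 3 → ℝ} {t : ℝ}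
    {V : Fin 3 → ℝ} (hu : DifferentiableAt ℝ u (x t)) (hx : HasDerivAt x V t) :
    HasDerivAt (fun s => u (x s)) (∑ i, V i * pd i u (x t)) t := by
  have h := HasFDerivAt.comp_hasDerivAt (l := u) (f := x) (x := t) hu.hasFDerivAt hx
  rwa [clm_apply_eq_sum] at h

/-- A particle constrained to the surface `f = c` (equations (12)/(K444)): along
solutions of `ẋ = v(x)` with `v = ∂₁G(f,Φ)(∇Φ − γ∇f)`, `f` is constant and the
acceleration differs from `∇(½‖v‖²)` by a vector normal to the surface. -/
theorem constrained_surface_motion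
    (f Φ : (Fin 3 → ℝ) → ℝ) (hf : ContDiff ℝ 2 f) (hΦ : ContDiff ℝ 2 Φ)
    (hf0 : ∀ x, grad f x ≠ 0)
    (G : ℝ × ℝ → ℝ) (hG : ContDiff ℝ 2 G)
    (g γ α : (Fin 3 → ℝ) → ℝ)
    (hg : ∀ x, g x = nsq (grad f x))
    (hγ : ∀ x, γ x = dot (grad f x) (grad Φ x) / g x)
    (hα : ∀ x, α x = fderiv ℝ G (f x, Φ x) (1, 0))
    (v : (Fin 3 → ℝ) → (Fin 3 → ℝ))
    (hv : ∀ x, v x = fun k => α x * (grad Φ x k - γ x * grad f x k))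
    (t₁ t₂ : ℝ) (x : ℝ → (Fin 3 → ℝ))
    (hx : ∀ t ∈ Ioo t₁ t₂, HasDerivAt x (v (x t)) t) :
    -- (i) the particle stays on the surface f = c
    (∀ t ∈ Ioo t₁ t₂, ∀ s ∈ Ioo t₁ t₂, f (x t) = f (x s)) ∧
    -- (ii) the reaction force is normal to the surface
    (∀ t ∈ Ioo t₁ t₂, ∃ μ : ℝ,
      HasDerivAt (fun s => v (x s))
        (fun k => grad (fun y => (1 / 2) * nsq (v y)) (x t) k + μ * grad f (x t) k) t) := by
  -- basic differentiability facts
  have hfd : Differentiable ℝ f := hf.differentiable (by norm_num)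
  have hΦd : Differentiable ℝ Φ := hΦ.differentiable (by norm_num)
  have hgfd : ∀ k, Differentiable ℝ (fun z => grad f z k) := fun k =>
    (contDiff_pi.mp (grad_contDiff hf) k).differentiable (by norm_num)
  have hgΦd : ∀ k, Differentiable ℝ (fun z => grad Φ z k) := fun k =>
    (contDiff_pi.mp (grad_contDiff hΦ) k).differentiable (by norm_num)
  have hg0 : ∀ z, nsq (grad f z) ≠ 0 := fun z h => hf0 z (nsq_eq_zero.mp h)
  have hγeq : γ = fun z => dot (grad f z) (grad Φ z) / nsq (grad f z) :=
    funext fun z => by rw [hγ z, hg z]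
  have hγc : ContDiff ℝ 1 γ := by
    rw [hγeq]
    refine ContDiff.div ?_ ?_ hg0
    · simp only [dot]
      exact ContDiff.sum fun i _ =>
        ((contDiff_pi.mp (grad_contDiff hf) i).mul (contDiff_pi.mp (grad_contDiff hΦ) i))
    · simp only [nsq]
      exact ContDiff.sum fun i _ => (contDiff_pi.mp (grad_contDiff hf) i).pow 2
  have hγd : Differentiable ℝ γ := hγc.differentiable (by norm_num)
  have hA : ContDiff ℝ 1 (fun q : ℝ × ℝ => fderiv ℝ G q (1, 0)) :=
    (ContinuousLinearMap.apply ℝ ℝ ((1:ℝ), (0:ℝ))).contDiff.comp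
      (hG.fderiv_right (m := 1) (by norm_num))
  have hαeq : α = fun z => (fun q : ℝ × ℝ => fderiv ℝ G q (1, 0)) (f z, Φ z) :=
    funext fun z => hα z
  have hαc : ContDiff ℝ 1 α := by
    rw [hαeq]
    exact hA.comp ((hf.of_le (by norm_num)).prodMk (hΦ.of_le (by norm_num)))
  have hαd : Differentiable ℝ α := hαc.differentiable (by norm_num)
  have hvk : ∀ k, (fun z => v z k) = fun z => α z * (grad Φ z k - γ z * grad f z k) :=
    fun k => funext fun z => by rw [hv]
  have hvd : ∀ k, Differentiable ℝ (fun z => v z k) := by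
    intro k
    rw [hvk k]
    exact hαd.mul ((hgΦd k).sub (hγd.mul (hgfd k)))
  -- the constraint relation
  have hgag : ∀ z, γ z * nsq (grad f z) = dot (grad f z) (grad Φ z) := by
    intro z
    rw [hγ z, hg z, div_mul_cancel₀ _ (hg0 z)]
  have key0 : ∀ z, ∑ i, v z i * grad f z i = 0 := by
    intro z
    have h1 := hgag z
    simp only [dot, nsq, Fin.sum_univ_three] at h1
    simp only [hv, Fin.sum_univ_three]
    linear_combination (-(α z)) * h1
  constructor
  · -- part (i)
    intro t ht s hs
    have hD : ∀ τ ∈ Ioo t₁ t₂, HasDerivAt (fun s => f (x s)) 0 τ := by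
      intro τ hτ
      have h1 := hasDerivAt_comp_curve (hfd (x τ)) (hx τ hτ)
      rwa [show (∑ i, v (x τ) i * pd i f (x τ)) = 0 from key0 (x τ)] at h1
    refine (convex_Ioo t₁ t₂).is_const_of_fderivWithin_eq_zero
      (fun τ hτ => (hD τ hτ).differentiableAt.differentiableWithinAt)
      (fun τ hτ => ?_) ht hs
    have h0 : HasFDerivAt (fun s => f (x s)) (0 : ℝ →L[ℝ] ℝ) τ := by
      have hz : (ContinuousLinearMap.smulRight (1 : ℝ →L[ℝ] ℝ) (0 : ℝ)) = 0 := by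
        ext; simp
      simpa [hz] using (hD τ hτ).hasFDerivAt
    rw [fderivWithin_of_isOpen isOpen_Ioo hτ, h0.fderiv]
  · -- part (ii)
    intro t ht
    -- second partials of G through α
    have hpdα : ∀ i, pd i α (x t) =
        fderiv ℝ (fun q : ℝ × ℝ => fderiv ℝ G q (1, 0)) (f (x t), Φ (x t)) (1, 0)
          * grad f (x t) i
        + fderiv ℝ (fun q : ℝ × ℝ => fderiv ℝ G q (1, 0)) (f (x t), Φ (x t)) (0, 1)
          * grad Φ (x t) i := by
      intro i
      have hAy : HasFDerivAt (fun q : ℝ × ℝ => fderiv ℝ G q (1, 0))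
          (fderiv ℝ (fun q : ℝ × ℝ => fderiv ℝ G q (1, 0)) (f (x t), Φ (x t)))
          (f (x t), Φ (x t)) := ((hA.differentiable (by norm_num)) _).hasFDerivAt
      have hq : HasFDerivAt (fun z => (f z, Φ z))
          ((fderiv ℝ f (x t)).prod (fderiv ℝ Φ (x t))) (x t) :=
        (hfd (x t)).hasFDerivAt.prodMk (hΦd (x t)).hasFDerivAt
      have hcomp := hAy.comp (x t) hq
      have hfda : fderiv ℝ α (x t) =
          (fderiv ℝ (fun q : ℝ × ℝ => fderiv ℝ G q (1, 0)) (f (x t), Φ (x t))).comp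
            ((fderiv ℝ f (x t)).prod (fderiv ℝ Φ (x t))) := by
        rw [hαeq]; exact hcomp.fderiv
      show fderiv ℝ α (x t) (Pi.single i 1) = _
      rw [hfda, ContinuousLinearMap.comp_apply]
      have hsp : ((fderiv ℝ f (x t)).prod (fderiv ℝ Φ (x t))) (Pi.single i 1)
          = (fderiv ℝ f (x t) (Pi.single i 1)) • ((1:ℝ), (0:ℝ))
            + (fderiv ℝ Φ (x t) (Pi.single i 1)) • ((0:ℝ), (1:ℝ)) := by
        simp [Prod.ext_iff]
      rw [hsp, map_add, map_smul, map_smul]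
      show _ • _ + _ • _ = _
      simp only [smul_eq_mul, grad, pd]
      ring
    -- formula for the partial derivatives of v
    have hpdv : ∀ i k, pd i (fun z => v z k) (x t) =
        pd i α (x t) * (grad Φ (x t) k - γ (x t) * grad f (x t) k)
        + α (x t) * (pd i (fun z => grad Φ z k) (x t)
            - (pd i γ (x t) * grad f (x t) k
               + γ (x t) * pd i (fun z => grad f z k) (x t))) := by
      intro i k
      rw [hvk k,
        pd_mul (hαd _) (((hgΦd k).fun_sub (hγd.fun_mul (hgfd k))) _) i,
        pd_sub ((hgΦd k) _) ((hγd.fun_mul (hgfd k)) _) i,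
        pd_mul (hγd _) ((hgfd k) _) i]
    -- gradient of half the squared speed
    have hpdhalf : ∀ k, pd k (fun z => 1 / 2 * nsq (v z)) (x t)
        = ∑ i, v (x t) i * pd k (fun z => v z i) (x t) := by
      intro k
      have e : (fun z => 1 / 2 * nsq (v z))
          = fun z => (1:ℝ)/2 * ∑ i, v z i * v z i := by
        funext z
        simp only [nsq]
        congr 1
        exact Finset.sum_congr rfl fun i _ => sq (v z i) ▸ (pow_two (v z i))
      rw [e, pd_const_mul _ (by
          exact (DifferentiableAt.fun_sum fun i _ => ((hvd i) _).mul ((hvd i) _))) k,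
        pd_sum (fun i => ((hvd i) _).fun_mul ((hvd i) _)) k]
      rw [Finset.mul_sum]
      refine Finset.sum_congr rfl fun i _ => ?_
      rw [pd_mul ((hvd i) _) ((hvd i) _) k]
      ring
    refine ⟨-((∑ i, v (x t) i * grad Φ (x t) i)
        * (fderiv ℝ (fun q : ℝ × ℝ => fderiv ℝ G q (1, 0)) (f (x t), Φ (x t)) (1, 0)
           + γ (x t) * fderiv ℝ (fun q : ℝ × ℝ => fderiv ℝ G q (1, 0)) (f (x t), Φ (x t)) (0, 1))
        + α (x t) * (∑ i, v (x t) i * pd i γ (x t))), ?_⟩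
    refine hasDerivAt_pi.mpr fun k => ?_
    have h1 := hasDerivAt_comp_curve ((hvd k) (x t)) (hx t ht)
    have h2 : ∑ i, v (x t) i * pd i (fun z => v z k) (x t)
        = pd k (fun z => 1 / 2 * nsq (v z)) (x t)
          + (-((∑ i, v (x t) i * grad Φ (x t) i)
        * (fderiv ℝ (fun q : ℝ × ℝ => fderiv ℝ G q (1, 0)) (f (x t), Φ (x t)) (1, 0)
           + γ (x t) * fderiv ℝ (fun q : ℝ × ℝ => fderiv ℝ G q (1, 0)) (f (x t), Φ (x t)) (0, 1))
        + α (x t) * (∑ i, v (x t) i * pd i γ (x t)))) * grad f (x t) k := by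
      rw [hpdhalf k]
      simp only [hpdv, hpdα, Fin.sum_univ_three]
      rw [pd_symm hf (x t) k 0, pd_symm hf (x t) k 1, pd_symm hf (x t) k 2,
          pd_symm hΦ (x t) k 0, pd_symm hΦ (x t) k 1, pd_symm hΦ (x t) k 2]
      simp only [hv]
      have h1 := hgag (x t)
      simp only [dot, nsq, Fin.sum_univ_three] at h1
      linear_combination (-(α (x t)) * (
        fderiv ℝ (fun q : ℝ × ℝ => fderiv ℝ G q (1, 0)) (f (x t), Φ (x t)) (1, 0) * grad Φ (x t) k
        + γ (x t) * fderiv ℝ (fun q : ℝ × ℝ => fderiv ℝ G q (1, 0)) (f (x t), Φ (x t)) (0, 1)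
            * grad Φ (x t) k
        + α (x t) * pd k γ (x t))) * h1
    rw [h2] at h1
    exact h1
end
end

section
/- Let m ∈ ℝ and let f : ℝ³∖{0} → ℝ be C² satisfying Euler's homogeneity identity ⟨x, ∇f(x)⟩ = m f(x) for all x ≠ 0. Suppose there are functions g̃ : ℝ² → ℝ, h : ℝ → ℝ, and a C¹ function α : ℝ³∖{0} → ℝ such that for all x ≠ 0: ‖∇f(x)‖² = g̃(f(x), ‖x‖) > 0 and α(x)² · ( g̃(f(x),‖x‖) ‖x‖² − m² f(x)² ) = 2 h(f(x)) · g̃(f(x), ‖x‖). Define v(x) = ( α(x) / g̃(f(x),‖x‖) ) · ( g̃(f(x),‖x‖) · x − m f(x) ∇f(x) ). Then along every solution x : I → ℝ³∖{0} of ẋ = v(x): f(x(t)) is constant, and g̃( f(x(t)), ‖x(t)‖ ) · ‖ x(t) × ẋ(t) ‖² = 2 m² f(x(t))² h( f(x(t)) ) for all t ∈ I; in particular g̃(f,‖x‖)·‖x × ẋ‖² is a first integral of the flow, so the geodesic flow on the homogeneous surface f = c with ‖∇f‖² a function of (f, ‖x‖) is integrable. -/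
open Real Set

noncomputable section

lemma clm_apply3 (L : (Fin 3 → ℝ) →L[ℝ] ℝ) (u : Fin 3 → ℝ) :
    L u = ∑ i, u i * L (Pi.single i 1) := by
  have hu : u = ∑ i : Fin 3, u i • (Pi.single i 1 : Fin 3 → ℝ) := by
    funext j
    simp [Pi.single_apply, Finset.sum_apply]
  conv_lhs => rw [hu]
  simp [mul_comm]

lemma lagrange3 (a b : Fin 3 → ℝ) :
    nsq (cross a b) = nsq a * nsq b - (dot a b) ^ 2 := by
  simp [nsq, cross, dot, Fin.sum_univ_three]
  ring

/-- Integrability of the geodesic flow on a homogeneous surface of degree `m` with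
`‖∇f‖² = g̃(f, ‖x‖)`: along solutions of the Cartesian flow (20), `f` is constant and
`g̃(f,‖x‖)‖x × ẋ‖² = 2m²f²h(f)` is a first integral. -/
theorem homogeneous_surface_geodesic_integrable
    (m : ℝ) (f : (Fin 3 → ℝ) → ℝ)
    (hfC : ContDiffOn ℝ 2 f {x : Fin 3 → ℝ | x ≠ 0})
    -- Euler's homogeneity identity
    (heuler : ∀ x : Fin 3 → ℝ, x ≠ 0 → dot x (grad f x) = m * f x)
    (gt : ℝ × ℝ → ℝ) (h : ℝ → ℝ)
    (α : (Fin 3 → ℝ) → ℝ) (hαC : ContDiffOn ℝ 1 α {x : Fin 3 → ℝ | x ≠ 0})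
    (hg : ∀ x : Fin 3 → ℝ, x ≠ 0 → nsq (grad f x) = gt (f x, nrm x))
    (hgpos : ∀ x : Fin 3 → ℝ, x ≠ 0 → 0 < gt (f x, nrm x))
    (hα : ∀ x : Fin 3 → ℝ, x ≠ 0 →
      α x ^ 2 * (gt (f x, nrm x) * nrm x ^ 2 - m ^ 2 * f x ^ 2)
        = 2 * h (f x) * gt (f x, nrm x))
    (v : (Fin 3 → ℝ) → (Fin 3 → ℝ))
    (hv : ∀ x : Fin 3 → ℝ, v x = fun k =>
      (α x / gt (f x, nrm x)) * (gt (f x, nrm x) * x k - m * f x * grad f x k))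
    (t₁ t₂ : ℝ) (x : ℝ → (Fin 3 → ℝ))
    (hx0 : ∀ t ∈ Ioo t₁ t₂, x t ≠ 0)
    (hx : ∀ t ∈ Ioo t₁ t₂, HasDerivAt x (v (x t)) t) :
    (∀ t ∈ Ioo t₁ t₂, ∀ s ∈ Ioo t₁ t₂, f (x t) = f (x s)) ∧
    (∀ t ∈ Ioo t₁ t₂,
      gt (f (x t), nrm (x t)) * nsq (cross (x t) (v (x t)))
        = 2 * m ^ 2 * f (x t) ^ 2 * h (f (x t))) := by

  have hopen : IsOpen {y : Fin 3 → ℝ | y ≠ 0} := isOpen_compl_singleton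
  -- derivative of f ∘ x is zero
  have key : ∀ t ∈ Ioo t₁ t₂, HasDerivAt (fun s => f (x s)) 0 t := by
    intro t ht
    have hxt := hx0 t ht
    have hdf : DifferentiableAt ℝ f (x t) :=
      (hfC.contDiffAt (hopen.mem_nhds hxt)).differentiableAt (by norm_num)
    have h1 : HasDerivAt (fun s => f (x s)) (fderiv ℝ f (x t) (v (x t))) t :=
      hdf.hasFDerivAt.comp_hasDerivAt t (hx t ht)
    have h2 : fderiv ℝ f (x t) (v (x t)) = 0 := by
      rw [clm_apply3]
      have hE := heuler (x t) hxt
      have hgg := hg (x t) hxt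
      have hG := (hgpos (x t) hxt).ne'
      rw [hv]
      simp only [dot, nsq, grad, pd, Fin.sum_univ_three] at hE hgg ⊢
      field_simp
      linear_combination (α (x t) * gt (f (x t), nrm (x t))) * hE -
        (α (x t) * m * f (x t)) * hgg
    rw [h2] at h1; exact h1
  have hconst : ∀ t ∈ Ioo t₁ t₂, ∀ s ∈ Ioo t₁ t₂, t ≤ s → f (x t) = f (x s) := by
    intro t ht s hs hts
    have hsub : Icc t s ⊆ Ioo t₁ t₂ := fun u hu =>
      ⟨lt_of_lt_of_le ht.1 hu.1, lt_of_le_of_lt hu.2 hs.2⟩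
    have := constant_of_has_deriv_right_zero (f := fun s => f (x s)) (a := t) (b := s)
      (fun u hu => ((key u (hsub hu)).continuousAt).continuousWithinAt)
      (fun u hu => ((key u (hsub (Ico_subset_Icc_self hu))).hasDerivWithinAt))
    exact (this s (right_mem_Icc.mpr hts)).symm
  constructor
  · intro t ht s hs
    rcases le_total t s with hts | hst
    · exact hconst t ht s hs hts
    · exact (hconst s hs t ht hst).symm
  · intro t ht
    have hxt := hx0 t ht
    have hE := heuler (x t) hxt
    have hgg := hg (x t) hxt
    have hGpos := hgpos (x t) hxt
    have hG := hGpos.ne'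
    have haq := hα (x t) hxt
    have hr2 : nrm (x t) ^ 2 = nsq (x t) := by
      rw [nrm, sq_sqrt]; · rfl
      · positivity
    rw [hr2] at haq
    have hcv : cross (x t) (v (x t)) =
        fun i => (-(α (x t) * m * f (x t) / gt (f (x t), nrm (x t)))) *
          cross (x t) (grad f (x t)) i := by
      rw [hv]; funext i
      fin_cases i <;> simp [cross] <;> field_simp <;> ring
    have hnsq : nsq (cross (x t) (v (x t))) =
        (α (x t) * m * f (x t) / gt (f (x t), nrm (x t))) ^ 2 *
          nsq (cross (x t) (grad f (x t))) := by
      rw [hcv]; simp only [nsq, Fin.sum_univ_three]; ring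
    rw [hnsq, lagrange3, hE, hgg]
    field_simp
    linear_combination (m ^ 2 * f (x t) ^ 2) * haq
end
end
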